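/- Transitivity is preserved under partial duality by transpositions from α: if σ, α, φ ∈ S_{2n} with σ α φ = 1, ⟨σ, α⟩ acts transitively on [2n], α is a fixed-point free involution with disjoint transposition factor c_j, then ⟨σ c_j, α⟩ also acts transitively on [2n]. -/
import Mathlib


/-- Transitivity is preserved under partial duality: if `⟨σ, α⟩` acts
transitively on `[2n]`, `α` is a fixed-point free involution and `c_j` is one
of the transpositions in its disjoint cycle decomposition, then `⟨σ c_j, α⟩`
is also transitive. -/
theorem partial_dual_transitive {n : ℕ} (σ α cj : Equiv.Perm (Fin (2 * n)))
    (htrans : ∀ a b : Fin (2 * n), ∃ g ∈ Subgroup.closure ({σ, α} :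
      Set (Equiv.Perm (Fin (2 * n)))), g a = b)
    (hinv : α * α = 1) (hfpf : ∀ x, α x ≠ x)
    (hswap : cj.IsSwap) (hfactor : ∀ x ∈ cj.support, α x = cj x) :
    ∀ a b : Fin (2 * n), ∃ g ∈ Subgroup.closure ({σ * cj, α} :
      Set (Equiv.Perm (Fin (2 * n)))), g a = b := by
  intro a b
  set H := Subgroup.closure ({σ * cj, α} : Set (Equiv.Perm (Fin (2 * n)))) with hH
  have hσcj : σ * cj ∈ H := Subgroup.subset_closure (by left; rfl)
  have hα : α ∈ H := Subgroup.subset_closure (by right; rfl)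
  have hcj2 : cj * cj = 1 := by
    obtain ⟨x, y, hxy, rfl⟩ := hswap
    exact Equiv.swap_mul_self x y
  -- simulate σ
  have key : ∀ a : Fin (2 * n), ∃ h ∈ H, h a = σ a := by
    intro a
    by_cases ha : a ∈ cj.support
    · refine ⟨(σ * cj) * α, mul_mem hσcj hα, ?_⟩
      have h1 : α a = cj a := hfactor a ha
      have h2 : cj (cj a) = a := by
        have := congrArg (fun g : Equiv.Perm (Fin (2 * n)) => g a) hcj2
        simpa using this
      simp [Equiv.Perm.mul_apply, h1, h2]
    · refine ⟨σ * cj, hσcj, ?_⟩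
      have h1 : cj a = a := Equiv.Perm.notMem_support.mp ha
      simp [Equiv.Perm.mul_apply, h1]
  obtain ⟨g, hg, hgab⟩ := htrans a b
  -- every element of ⟨σ, α⟩ is pointwise simulated by H
  have main : ∀ g ∈ Subgroup.closure ({σ, α} : Set (Equiv.Perm (Fin (2 * n)))),
      ∀ a : Fin (2 * n), ∃ h ∈ H, h a = g a := by
    intro g hg
    induction hg using Subgroup.closure_induction with
    | mem x hx =>
        intro a
        rcases hx with hx | hx
        · rw [hx]; exact key a
        · rw [hx]; exact ⟨α, hα, rfl⟩
    | one => exact fun a => ⟨1, one_mem H, rfl⟩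
    | mul x y hx hy ihx ihy =>
        intro a
        obtain ⟨h₁, hh₁, e₁⟩ := ihy a
        obtain ⟨h₂, hh₂, e₂⟩ := ihx (y a)
        exact ⟨h₂ * h₁, mul_mem hh₂ hh₁, by simp [Equiv.Perm.mul_apply, e₁, e₂]⟩
    | inv x hx ihx =>
        intro a
        obtain ⟨h, hh, e⟩ := ihx (x⁻¹ a)
        refine ⟨h⁻¹, inv_mem hh, ?_⟩
        have : x (x⁻¹ a) = a := by simp
        rw [this] at e
        have := congrArg (fun z => h⁻¹ z) e
        simpa using this.symm
  obtain ⟨h, hh, e⟩ := main g hg a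
  exact ⟨h, hh, by rw [e, hgab]⟩
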